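/- Let (M, Σ_M, μ_M) be a measure space whose measure is not purely infinite (there exists a measurable set A with 0 < μ_M(A) < ∞), let (N, d_N) be a complete metric space, h : M → N strongly measurable, and p ∈ (1,∞). If (L^p_h(M,N), D_p) is a geodesic space — every pair F, F' ∈ L^p_h(M,N) is joined by a curve c : [0,1] → L^p_h(M,N) with c(0) = F, c(1) = F', and D_p(c(s), c(t)) = |s−t| · D_p(F,F') for all s, t — then N is a geodesic space: every pair y, y' ∈ N is joined by a curve γ : [0,1] → N with γ(0) = y, γ(1) = y', and d_N(γ(s), γ(t)) = |s−t| · d_N(y,y') for all s, t ∈ [0,1]. -/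

import Mathlib

set_option linter.unusedSectionVars false

open MeasureTheory ENNReal Set Filter Topology TopologicalSpace

noncomputable section

namespace NLS

variable {α : Type*} [MeasurableSpace α] {N : Type*} [MetricSpace N]
  [MeasurableSpace N] [BorelSpace N]

/-- "Strongly measurable": Borel measurable with separable range. -/
def SM (f : α → N) : Prop :=
  Measurable f ∧ TopologicalSpace.IsSeparable (Set.range f)

theorem SM.aesm {f : α → N} (hf : SM f) (μ : Measure α) :
    AEStronglyMeasurable f μ :=
  (stronglyMeasurable_iff_measurable_separable.2 ⟨hf.1, hf.2⟩).aestronglyMeasurable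

/-- The `L^p` (extended) distance between two maps with values in a metric space;
for `p < ∞` it is `(∫ d(f x, g x)^p dμ)^{1/p}` and for `p = ∞` the essential supremum
of `x ↦ d(f x, g x)`. -/
def Dp (μ : Measure α) (p : ℝ≥0∞) (f g : α → N) : ℝ≥0∞ :=
  eLpNorm (fun x => dist (f x) (g x)) p μ

theorem Dp_self (μ : Measure α) (p : ℝ≥0∞) (f : α → N) : Dp μ p f f = 0 := by
  unfold Dp
  simp only [dist_self]
  exact eLpNorm_zero'

theorem Dp_comm (μ : Measure α) (p : ℝ≥0∞) (f g : α → N) : Dp μ p f g = Dp μ p g f := by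
  unfold Dp
  simp only [dist_comm]

theorem Dp_triangle {μ : Measure α} {p : ℝ≥0∞} (hp : 1 ≤ p) {f g k : α → N}
    (hf : AEStronglyMeasurable f μ) (hg : AEStronglyMeasurable g μ)
    (hk : AEStronglyMeasurable k μ) :
    Dp μ p f k ≤ Dp μ p f g + Dp μ p g k := by
  have h1 : Dp μ p f k ≤
      eLpNorm ((fun x => dist (f x) (g x)) + fun x => dist (g x) (k x)) p μ := by
    refine eLpNorm_mono fun x => ?_
    simp only [Pi.add_apply, Real.norm_eq_abs]
    rw [abs_of_nonneg dist_nonneg]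
    exact (dist_triangle (f x) (g x) (k x)).trans (le_abs_self _)
  exact h1.trans (eLpNorm_add_le (hf.dist hg) (hg.dist hk) hp)

/-- The nonlinear Lebesgue space `L^p_h(α, N)` with base map `h`, presented by
representatives: Borel measurable, separably valued maps at finite `D_p`-distance
from `h`.  Two representatives at `D_p`-distance `0` (equivalently, `μ`-a.e. equal)
represent the same element of the quotient nonlinear Lebesgue space; accordingly the
canonical structure below is a pseudometric space whose metric (separation) quotient is
the actual nonlinear Lebesgue space.  All topological and Borel-measurability notions for
the quotient correspond exactly to those of this pseudometric space. -/
def NLp (μ : Measure α) (h : α → N) (_hh : SM h) (p : ℝ≥0∞) : Type _ :=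
  {f : α → N // SM f ∧ Dp μ p f h ≠ ∞}

namespace NLp

variable {μ : Measure α} {h : α → N} {hh : SM h} {p : ℝ≥0∞}

def pem (μ : Measure α) (h : α → N) (hh : SM h) (p : ℝ≥0∞) (hp : 1 ≤ p) :
    PseudoEMetricSpace (NLp μ h hh p) where
  edist f g := Dp μ p f.1 g.1
  edist_self f := Dp_self μ p f.1
  edist_comm f g := Dp_comm μ p f.1 g.1
  edist_triangle f g k := Dp_triangle hp (f.2.1.aesm μ) (g.2.1.aesm μ) (k.2.1.aesm μ)

theorem dp_ne_top (hp : 1 ≤ p) (f g : NLp μ h hh p) : Dp μ p f.1 g.1 ≠ ∞ := by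
  have htri := Dp_triangle hp (f.2.1.aesm μ) (hh.aesm μ) (g.2.1.aesm μ)
  have h2 : Dp μ p h g.1 ≠ ∞ := by rw [Dp_comm]; exact g.2.2
  exact ne_top_of_le_ne_top (ENNReal.add_ne_top.2 ⟨f.2.2, h2⟩) htri

/-- The `D_p` pseudometric on the nonlinear Lebesgue space. -/
instance [hp : Fact (1 ≤ p)] : PseudoMetricSpace (NLp μ h hh p) :=
  @PseudoEMetricSpace.toPseudoMetricSpace _ (pem μ h hh p hp.out)
    (fun f g => dp_ne_top hp.out f g)

instance [Fact (1 ≤ p)] : MeasurableSpace (NLp μ h hh p) := borel _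
instance [Fact (1 ≤ p)] : BorelSpace (NLp μ h hh p) := ⟨rfl⟩

theorem edist_def [Fact (1 ≤ p)] (f g : NLp μ h hh p) :
    edist f g = Dp μ p f.1 g.1 := rfl

theorem dist_def [Fact (1 ≤ p)] (f g : NLp μ h hh p) :
    dist f g = (Dp μ p f.1 g.1).toReal := rfl

end NLp

/-- Absolutely continuous curves: `c ∈ AC^p([a,b], X)`. -/
def MemACp {X : Type*} [PseudoMetricSpace X] (p : ℝ≥0∞) (a b : ℝ) (c : ℝ → X) : Prop :=
  ∃ m : ℝ → ℝ, MemLp m p (volume.restrict (Set.Icc a b)) ∧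
    ∀ s t : ℝ, a ≤ s → s ≤ t → t ≤ b → dist (c s) (c t) ≤ ∫ r in s..t, m r

/-- The metric derivative of a curve at `t` (limit of difference quotients within `[a,b]`). -/
def mder {X : Type*} [PseudoMetricSpace X] (a b : ℝ) (c : ℝ → X) (t : ℝ) : ℝ :=
  limUnder (𝓝[Set.Icc a b \ {t}] t) fun s => dist (c s) (c t) / |s - t|

lemma jensen_eq {p l a b w : ℝ} (hp : 1 < p) (hl : 0 < l) (hl1 : l < 1)
    (ha : 0 ≤ a) (hb : 0 ≤ b) (hw : 0 ≤ w)
    (hle : w ≤ l * a + (1 - l) * b) (heq : w ^ p = l * a ^ p + (1 - l) * b ^ p) :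
    a = w ∧ b = w := by
  have h1l : (0:ℝ) < 1 - l := by linarith
  have hab : a = b := by
    by_contra hne
    have hst := (strictConvexOn_rpow hp).2 (Set.mem_Ici.2 ha) (Set.mem_Ici.2 hb)
      hne hl h1l (by ring)
    simp only [smul_eq_mul] at hst
    have h2 : w ^ p ≤ (l * a + (1 - l) * b) ^ p :=
      Real.rpow_le_rpow hw hle (by linarith)
    linarith
  subst hab
  have he : w ^ p = a ^ p := by rw [heq]; ring
  have := Real.rpow_left_injOn (x := p) (by positivity) (Set.mem_setOf.2 hw)
    (Set.mem_setOf.2 ha) he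
  exact ⟨this.symm, this.symm⟩

lemma key_prop {α : Type*} [MeasurableSpace α] {μ : Measure α} {p l : ℝ}
    (hp : 1 < p) (hl : 0 < l) (hl1 : l < 1) {u v w : α → ℝ}
    (hu0 : ∀ x, 0 ≤ u x) (hv0 : ∀ x, 0 ≤ v x) (hw0 : ∀ x, 0 ≤ w x)
    (htri : ∀ x, w x ≤ u x + v x)
    (hui : Integrable (fun x => u x ^ p) μ)
    (hvi : Integrable (fun x => v x ^ p) μ)
    (hwi : Integrable (fun x => w x ^ p) μ)
    (hUu : ∫ x, u x ^ p ∂μ = l ^ p * ∫ x, w x ^ p ∂μ)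
    (hUv : ∫ x, v x ^ p ∂μ = (1 - l) ^ p * ∫ x, w x ^ p ∂μ) :
    ∀ᵐ x ∂μ, u x = l * w x ∧ v x = (1 - l) * w x := by
  have h1l : (0:ℝ) < 1 - l := by linarith
  have hp0 : (0:ℝ) < p := by linarith
  set g : α → ℝ := fun x => l ^ (1 - p) * u x ^ p + (1 - l) ^ (1 - p) * v x ^ p with hg
  -- key pointwise identities
  have hlid : ∀ x, l * (u x / l) ^ p = l ^ (1 - p) * u x ^ p := by
    intro x
    rw [Real.div_rpow (hu0 x) hl.le, Real.rpow_sub hl, Real.rpow_one]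
    ring
  have hlid' : ∀ x, (1 - l) * (v x / (1 - l)) ^ p = (1 - l) ^ (1 - p) * v x ^ p := by
    intro x
    rw [Real.div_rpow (hv0 x) h1l.le, Real.rpow_sub h1l, Real.rpow_one]
    ring
  have hfg : ∀ x, w x ^ p ≤ g x := by
    intro x
    have h1 : w x ≤ l * (u x / l) + (1 - l) * (v x / (1 - l)) := by
      rw [mul_div_cancel₀ _ hl.ne', mul_div_cancel₀ _ h1l.ne']
      exact htri x
    have h2 : w x ^ p ≤ (l * (u x / l) + (1 - l) * (v x / (1 - l))) ^ p :=
      Real.rpow_le_rpow (hw0 x) h1 hp0.le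
    have h3 := (strictConvexOn_rpow hp).convexOn.2 (Set.mem_Ici.2 (div_nonneg (hu0 x) hl.le))
      (Set.mem_Ici.2 (div_nonneg (hv0 x) h1l.le)) hl.le h1l.le (by ring)
    simp only [smul_eq_mul] at h3
    calc w x ^ p ≤ _ := h2
      _ ≤ l * (u x / l) ^ p + (1 - l) * (v x / (1 - l)) ^ p := h3
      _ = g x := by rw [hlid, hlid']
  have hgi : Integrable g μ := (hui.const_mul _).add (hvi.const_mul _)
  have hGint : ∫ x, g x ∂μ = ∫ x, w x ^ p ∂μ := by
    rw [hg]
    rw [integral_add (hui.const_mul _) (hvi.const_mul _), integral_const_mul,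
      integral_const_mul, hUu, hUv]
    have e1 : l ^ (1 - p) * l ^ p = l := by
      rw [← Real.rpow_add hl]; simp
    have e2 : (1 - l) ^ (1 - p) * ((1 - l) ^ p) = 1 - l := by
      rw [← Real.rpow_add h1l]; simp
    calc l ^ (1 - p) * (l ^ p * ∫ x, w x ^ p ∂μ)
        + (1 - l) ^ (1 - p) * ((1 - l) ^ p * ∫ x, w x ^ p ∂μ)
        = (l ^ (1 - p) * l ^ p) * ∫ x, w x ^ p ∂μ
          + ((1 - l) ^ (1 - p) * (1 - l) ^ p) * ∫ x, w x ^ p ∂μ := by ring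
      _ = ∫ x, w x ^ p ∂μ := by rw [e1, e2]; ring
  have hdiff : (fun x => g x - w x ^ p) =ᵐ[μ] 0 :=
    (integral_eq_zero_iff_of_nonneg_ae
      (Filter.Eventually.of_forall fun x => sub_nonneg.2 (hfg x)) (hgi.sub hwi)).1
      (by rw [integral_sub hgi hwi, hGint, sub_self])
  filter_upwards [hdiff] with x hx
  simp only [Pi.zero_apply] at hx
  have hxeq : w x ^ p = g x := by linarith
  have hle : w x ≤ l * (u x / l) + (1 - l) * (v x / (1 - l)) := by
    rw [mul_div_cancel₀ _ hl.ne', mul_div_cancel₀ _ h1l.ne']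
    exact htri x
  have heq : w x ^ p = l * (u x / l) ^ p + (1 - l) * (v x / (1 - l)) ^ p := by
    rw [hlid, hlid']; exact hxeq
  obtain ⟨h1, h2⟩ := jensen_eq hp hl hl1 (div_nonneg (hu0 x) hl.le)
    (div_nonneg (hv0 x) h1l.le) (hw0 x) hle heq
  constructor
  · field_simp at h1; linarith
  · field_simp at h2; linarith

/-- If the measure `μ` is not purely infinite (some measurable set has finite positive
measure), `N` is complete and `1 < p < ∞`, and the nonlinear Lebesgue space
`(L^p_h(M,N), D_p)` is a geodesic space, then `N` itself is a geodesic space. -/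
theorem stmt16 {α : Type*} [MeasurableSpace α] {N : Type*} [MetricSpace N]
    [MeasurableSpace N] [BorelSpace N] [CompleteSpace N]
    (μ : Measure α) (hμ : ∃ A : Set α, MeasurableSet A ∧ 0 < μ A ∧ μ A < ∞)
    (h : α → N) (hh : SM h)
    (p : ℝ) (hp : 1 < p) [Fact (1 ≤ ENNReal.ofReal p)]
    (hgeo : ∀ F F' : NLp μ h hh (ENNReal.ofReal p),
      ∃ c : ℝ → NLp μ h hh (ENNReal.ofReal p), c 0 = F ∧ c 1 = F' ∧
        ∀ s ∈ Set.Icc (0:ℝ) 1, ∀ t ∈ Set.Icc (0:ℝ) 1,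
          dist (c s) (c t) = |s - t| * dist F F') :
    ∀ y y' : N, ∃ γ : ℝ → N, γ 0 = y ∧ γ 1 = y' ∧
      ∀ s ∈ Set.Icc (0:ℝ) 1, ∀ t ∈ Set.Icc (0:ℝ) 1,
        dist (γ s) (γ t) = |s - t| * dist y y' := by
  classical
  intro y y'
  set P := ENNReal.ofReal p with hPdef
  have hfact : (1:ℝ≥0∞) ≤ P := Fact.out
  have hp0 : (0:ℝ) < p := by linarith
  have hPne0 : P ≠ 0 := by
    simp only [hPdef, ne_eq, ENNReal.ofReal_eq_zero, not_le]; linarith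
  have hPtop : P ≠ ∞ := ENNReal.ofReal_ne_top
  have hPto : P.toReal = p := ENNReal.toReal_ofReal hp0.le
  -- choose a set of positive finite measure on which h is bounded
  obtain ⟨A, hA, hA0, hAfin⟩ := hμ
  have hex : ∃ n : ℕ, 0 < μ (A ∩ h ⁻¹' Metric.closedBall y n) := by
    by_contra hc
    push_neg at hc
    have h0 : ∀ n : ℕ, μ (A ∩ h ⁻¹' Metric.closedBall y n) = 0 :=
      fun n => le_antisymm (hc n) zero_le
    have hsub : A ⊆ ⋃ n : ℕ, A ∩ h ⁻¹' Metric.closedBall y n := by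
      intro x hx
      obtain ⟨n, hn⟩ := exists_nat_ge (dist (h x) y)
      exact Set.mem_iUnion.2 ⟨n, hx, by simpa [Metric.mem_closedBall] using hn⟩
    exact absurd (measure_mono_null hsub (measure_iUnion_null h0)) hA0.ne'
  obtain ⟨n, hn⟩ := hex
  set A' : Set α := A ∩ h ⁻¹' Metric.closedBall y n with hA'def
  have hA'm : MeasurableSet A' := hA.inter (hh.1 measurableSet_closedBall)
  have hA'fin : μ A' < ∞ := lt_of_le_of_lt (measure_mono Set.inter_subset_left) hAfin
  have hA'ne : A'.Nonempty := nonempty_of_measure_ne_zero hn.ne'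
  -- construction of elements of NLp that are constant on A' and equal to h elsewhere
  have hmk : ∀ (z : N) (C : ℝ), (∀ x ∈ A', dist z (h x) ≤ C) →
      SM (A'.piecewise (fun _ => z) h) ∧ Dp μ P (A'.piecewise (fun _ => z) h) h ≠ ∞ := by
    intro z C hC
    have hCnn : 0 ≤ C := by
      obtain ⟨x, hx⟩ := hA'ne
      exact dist_nonneg.trans (hC x hx)
    refine ⟨⟨Measurable.piecewise hA'm measurable_const hh.1, ?_⟩, ?_⟩
    · have hsub : Set.range (A'.piecewise (fun _ => z) h) ⊆ {z} ∪ Set.range h := by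
        rintro _ ⟨x, rfl⟩
        by_cases hx : x ∈ A'
        · rw [Set.piecewise_eq_of_mem _ _ _ hx]; exact Or.inl rfl
        · rw [Set.piecewise_eq_of_notMem _ _ _ hx]; exact Or.inr ⟨x, rfl⟩
      exact ((Set.countable_singleton z).isSeparable.union hh.2).mono hsub
    · have hpt : ∀ x, ‖dist (A'.piecewise (fun _ => z) h x) (h x)‖ ≤
          ‖A'.indicator (fun _ => C) x‖ := by
        intro x
        by_cases hx : x ∈ A'
        · rw [Set.piecewise_eq_of_mem _ _ _ hx, Set.indicator_of_mem hx,
            Real.norm_eq_abs, Real.norm_eq_abs, abs_dist, abs_of_nonneg hCnn]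
          exact hC x hx
        · rw [Set.piecewise_eq_of_notMem _ _ _ hx, Set.indicator_of_notMem hx]
          simp
      have hle : Dp μ P (A'.piecewise (fun _ => z) h) h ≤
          eLpNorm (A'.indicator (fun _ => C)) P μ := eLpNorm_mono hpt
      rw [eLpNorm_indicator_const hA'm hPne0 hPtop] at hle
      exact ne_top_of_le_ne_top (ENNReal.mul_ne_top ENNReal.coe_ne_top
        (ENNReal.rpow_ne_top_of_nonneg (by positivity) hA'fin.ne)) hle
  have hby : ∀ x ∈ A', dist y (h x) ≤ (n : ℝ) := by
    intro x hx
    rw [dist_comm]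
    exact hx.2
  have hby' : ∀ x ∈ A', dist y' (h x) ≤ dist y' y + (n : ℝ) := fun x hx =>
    (dist_triangle y' y (h x)).trans (by linarith [hby x hx])
  set F : NLp μ h hh P := ⟨A'.piecewise (fun _ => y) h, hmk y n hby⟩ with hFdef
  set F' : NLp μ h hh P := ⟨A'.piecewise (fun _ => y') h, hmk y' _ hby'⟩ with hF'def
  obtain ⟨c, hc0, hc1, hcd⟩ := hgeo F F'
  -- integral identities for distances between elements of the nonlinear Lebesgue space
  have hmemdd : ∀ f g : NLp μ h hh P, MemLp (fun x => dist (f.1 x) (g.1 x)) P μ :=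
    fun f g => ⟨(f.2.1.aesm μ).dist (g.2.1.aesm μ), (NLp.dp_ne_top hfact f g).lt_top⟩
  have hddint : ∀ f g : NLp μ h hh P, Integrable (fun x => dist (f.1 x) (g.1 x) ^ p) μ := by
    intro f g
    have := (hmemdd f g).integrable_norm_rpow hPne0 hPtop
    simpa [hPto, Real.norm_eq_abs, abs_dist] using this
  have hddeq : ∀ f g : NLp μ h hh P,
      ∫ x, dist (f.1 x) (g.1 x) ^ p ∂μ = dist f g ^ p := by
    intro f g
    have hint_nn : 0 ≤ ∫ x, dist (f.1 x) (g.1 x) ^ p ∂μ :=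
      integral_nonneg fun x => Real.rpow_nonneg dist_nonneg _
    have he := (hmemdd f g).eLpNorm_eq_integral_rpow_norm hPne0 hPtop
    rw [hPto] at he
    simp only [Real.norm_eq_abs, abs_dist] at he
    rw [NLp.dist_def]
    rw [show Dp μ P f.1 g.1 = _ from he,
      ENNReal.toReal_ofReal (Real.rpow_nonneg hint_nn _),
      ← Real.rpow_mul hint_nn, inv_mul_cancel₀ (ne_of_gt hp0), Real.rpow_one]
  -- the triple splitting lemma along the geodesic
  have htriple : ∀ s r t : ℝ, 0 ≤ s → s < r → r < t → t ≤ 1 →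
      ∀ᵐ x ∂μ, dist ((c s).1 x) ((c r).1 x)
          = ((r - s) / (t - s)) * dist ((c s).1 x) ((c t).1 x) ∧
        dist ((c r).1 x) ((c t).1 x)
          = ((t - r) / (t - s)) * dist ((c s).1 x) ((c t).1 x) := by
    intro s r t h0s hsr hrt ht1
    have hts : (0:ℝ) < t - s := by linarith
    set l := (r - s) / (t - s) with hldef
    have hl : 0 < l := div_pos (by linarith) hts
    have hl1 : l < 1 := (div_lt_one hts).2 (by linarith)
    have hs1 : s ∈ Set.Icc (0:ℝ) 1 := ⟨h0s, by linarith⟩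
    have hr1 : r ∈ Set.Icc (0:ℝ) 1 := ⟨by linarith, by linarith⟩
    have ht1' : t ∈ Set.Icc (0:ℝ) 1 := ⟨by linarith, ht1⟩
    have hDR : (0:ℝ) ≤ dist F F' := dist_nonneg
    have e_sr : dist (c s) (c r) = (r - s) * dist F F' := by
      rw [hcd s hs1 r hr1, abs_of_neg (by linarith : s - r < 0)]; ring_nf
    have e_rt : dist (c r) (c t) = (t - r) * dist F F' := by
      rw [hcd r hr1 t ht1', abs_of_neg (by linarith : r - t < 0)]; ring_nf
    have e_st : dist (c s) (c t) = (t - s) * dist F F' := by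
      rw [hcd s hs1 t ht1', abs_of_neg (by linarith : s - t < 0)]; ring_nf
    have iw : ∫ x, dist ((c s).1 x) ((c t).1 x) ^ p ∂μ = ((t - s) * dist F F') ^ p := by
      rw [hddeq, e_st]
    have iu : ∫ x, dist ((c s).1 x) ((c r).1 x) ^ p ∂μ
        = l ^ p * ∫ x, dist ((c s).1 x) ((c t).1 x) ^ p ∂μ := by
      rw [hddeq, e_sr, iw, ← Real.mul_rpow hl.le (mul_nonneg (by linarith) hDR)]
      congr 1
      rw [hldef]
      field_simp
    have hone : 1 - l = (t - r) / (t - s) := by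
      rw [hldef]
      field_simp
      ring
    have iv : ∫ x, dist ((c r).1 x) ((c t).1 x) ^ p ∂μ
        = (1 - l) ^ p * ∫ x, dist ((c s).1 x) ((c t).1 x) ^ p ∂μ := by
      rw [hddeq, e_rt, iw, hone, ← Real.mul_rpow
        (div_nonneg (by linarith) (by linarith)) (mul_nonneg (by linarith) hDR)]
      congr 1
      field_simp
    have hkey := key_prop hp hl hl1 (fun x => dist_nonneg) (fun x => dist_nonneg)
      (fun x => dist_nonneg) (fun x => dist_triangle _ _ _)
      (hddint (c s) (c r)) (hddint (c r) (c t)) (hddint (c s) (c t)) iu iv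
    filter_upwards [hkey] with x hx
    exact ⟨hx.1, by rw [hx.2, hone]⟩
  -- pairwise distances along the geodesic
  have hpair : ∀ s t : ℝ, 0 ≤ s → s ≤ t → t ≤ 1 →
      ∀ᵐ x ∂μ, dist ((c s).1 x) ((c t).1 x)
        = (t - s) * dist (F.1 x) (F'.1 x) := by
    intro s t h0s hst ht1
    rcases eq_or_lt_of_le hst with rfl | hst'
    · exact Filter.Eventually.of_forall fun x => by simp
    have hleft : ∀ b : ℝ, 0 < b → b < 1 → ∀ᵐ x ∂μ,
        dist ((c 0).1 x) ((c b).1 x) = b * dist (F.1 x) (F'.1 x) := by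
      intro b hb0 hb1
      filter_upwards [htriple 0 b 1 le_rfl hb0 hb1 le_rfl] with x hx
      rw [hx.1, hc0, hc1]
      ring_nf
    rcases eq_or_lt_of_le h0s with hs0 | hs0
    · subst hs0
      rcases eq_or_lt_of_le ht1 with rfl | ht1'
      · refine Filter.Eventually.of_forall fun x => ?_
        rw [hc0, hc1]; ring_nf
      · filter_upwards [hleft t hst' ht1'] with x hx
        rw [hx]; ring_nf
    · rcases eq_or_lt_of_le ht1 with rfl | ht1'
      · filter_upwards [htriple 0 s 1 le_rfl hs0 hst' le_rfl] with x hx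
        rw [hx.2, hc0, hc1]; ring_nf
      · have h0t : 0 < t := lt_trans hs0 hst'
        filter_upwards [htriple 0 s t le_rfl hs0 hst' ht1'.le,
          hleft t h0t ht1'] with x hx hLx
        have ht0 : t ≠ 0 := ne_of_gt h0t
        rw [hx.2, hLx, sub_zero]
        field_simp
  -- a.e. statement simultaneously over all rational pairs
  have hAE : ∀ᵐ x ∂μ, ∀ q q' : ℚ, 0 ≤ q → q ≤ q' → q' ≤ 1 →
      dist ((c (q:ℝ)).1 x) ((c (q':ℝ)).1 x)
        = ((q':ℝ) - (q:ℝ)) * dist (F.1 x) (F'.1 x) := by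
    rw [MeasureTheory.ae_all_iff]
    intro q
    rw [MeasureTheory.ae_all_iff]
    intro q'
    by_cases hq : 0 ≤ q ∧ q ≤ q' ∧ q' ≤ 1
    · obtain ⟨h1, h2, h3⟩ := hq
      filter_upwards [hpair (q:ℝ) (q':ℝ) (by exact_mod_cast h1) (by exact_mod_cast h2)
        (by exact_mod_cast h3)] with x hx
      exact fun _ _ _ => hx
    · exact Filter.Eventually.of_forall fun x h1 h2 h3 => absurd ⟨h1, h2, h3⟩ hq
  -- pick a good point in A'
  have hx0ex : ∃ x₀, x₀ ∈ A' ∧ ∀ q q' : ℚ, 0 ≤ q → q ≤ q' → q' ≤ 1 →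
      dist ((c (q:ℝ)).1 x₀) ((c (q':ℝ)).1 x₀)
        = ((q':ℝ) - (q:ℝ)) * dist (F.1 x₀) (F'.1 x₀) := by
    by_contra hcon
    push_neg at hcon
    have hsub : A' ⊆ {x | ¬ ∀ q q' : ℚ, 0 ≤ q → q ≤ q' → q' ≤ 1 →
        dist ((c (q:ℝ)).1 x) ((c (q':ℝ)).1 x)
          = ((q':ℝ) - (q:ℝ)) * dist (F.1 x) (F'.1 x)} := by
      intro x hx
      simp only [Set.mem_setOf_eq]
      intro hall
      obtain ⟨q, q', h1, h2, h3, hne⟩ := hcon x hx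
      exact hne (hall q q' h1 h2 h3)
    exact absurd (measure_mono_null hsub (MeasureTheory.ae_iff.1 hAE)) hn.ne'
  obtain ⟨x₀, hx₀A, hx₀⟩ := hx0ex
  have hFx : F.1 x₀ = y := by
    rw [hFdef]
    show A'.piecewise (fun _ => y) h x₀ = y
    exact Set.piecewise_eq_of_mem _ _ _ hx₀A
  have hFx' : F'.1 x₀ = y' := by
    rw [hF'def]
    show A'.piecewise (fun _ => y') h x₀ = y'
    exact Set.piecewise_eq_of_mem _ _ _ hx₀A
  -- distances along the geodesic at the point x₀
  have hphi : ∀ q q' : ℚ, 0 ≤ q → q ≤ 1 → 0 ≤ q' → q' ≤ 1 →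
      dist ((c (q:ℝ)).1 x₀) ((c (q':ℝ)).1 x₀) = |(q:ℝ) - (q':ℝ)| * dist y y' := by
    intro q q' h1 h2 h3 h4
    rcases le_total q q' with hle | hle
    · rw [hx₀ q q' h1 hle h4, hFx, hFx',
        abs_of_nonpos (by simp only [sub_nonpos]; exact_mod_cast hle)]
      ring
    · rw [dist_comm, hx₀ q' q h3 hle h2, hFx, hFx',
        abs_of_nonneg (by simp only [sub_nonneg]; exact_mod_cast hle)]
  -- rational approximating sequences
  set qs : ℕ → ℝ → ℚ :=
    fun m t => max 0 (min 1 ((⌊t * ((m:ℝ)+1)⌋ : ℚ) / ((m:ℚ)+1))) with hqs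
  have hqs0 : ∀ m t, 0 ≤ qs m t := fun m t => le_max_left _ _
  have hqs1 : ∀ m t, qs m t ≤ 1 := fun m t => max_le zero_le_one (min_le_left _ _)
  have hclamp : ∀ a t : ℝ, t ∈ Set.Icc (0:ℝ) 1 → |max 0 (min 1 a) - t| ≤ |a - t| := by
    intro a t ht
    obtain ⟨ht0, ht1⟩ := ht
    rcases le_or_gt a 0 with hc1 | hc1
    · rw [min_eq_right (hc1.trans zero_le_one), max_eq_left hc1, zero_sub, abs_neg,
        abs_of_nonneg ht0, abs_of_nonpos (by linarith)]
      linarith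
    rcases le_or_gt 1 a with hc2 | hc2
    · rw [min_eq_left hc2, max_eq_right zero_le_one, abs_of_nonneg (by linarith),
        abs_of_nonneg (by linarith)]
      linarith
    · rw [min_eq_right hc2.le, max_eq_right hc1.le]
  have hqsapprox : ∀ (m : ℕ) (t : ℝ), t ∈ Set.Icc (0:ℝ) 1 →
      |((qs m t : ℚ) : ℝ) - t| ≤ 1 / ((m:ℝ)+1) := by
    intro m t ht
    have hm1 : (0:ℝ) < (m:ℝ)+1 := by positivity
    set z : ℝ := t * ((m:ℝ)+1) with hz
    set r : ℝ := ((⌊z⌋ : ℝ)) / ((m:ℝ)+1) with hr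
    have hcast : ((qs m t : ℚ) : ℝ) = max 0 (min 1 r) := by
      rw [hqs]
      push_cast [Rat.cast_max, Rat.cast_min]
      rfl
    have hfl : |r - t| ≤ 1 / ((m:ℝ)+1) := by
      have h1 := Int.floor_le z
      have h2 := Int.lt_floor_add_one z
      have hrt : r - t = ((⌊z⌋ : ℝ) - z) / ((m:ℝ)+1) := by
        rw [hr, hz]
        field_simp
      rw [hrt, abs_div, abs_of_pos hm1]
      gcongr
      rw [abs_le]
      constructor <;> linarith
    rw [hcast]
    exact (hclamp r t ht).trans hfl
  have htendqs : ∀ t ∈ Set.Icc (0:ℝ) 1,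
      Tendsto (fun m : ℕ => ((qs m t : ℚ) : ℝ)) atTop (𝓝 t) := by
    intro t ht
    rw [← tendsto_sub_nhds_zero_iff, tendsto_zero_iff_abs_tendsto_zero]
    exact squeeze_zero (fun m => abs_nonneg _) (fun m => hqsapprox m t ht)
      tendsto_one_div_add_atTop_nhds_zero_nat
  have hdistseq : ∀ (a b : ℕ) (s t : ℝ),
      dist ((c ((qs a s : ℚ):ℝ)).1 x₀) ((c ((qs b t : ℚ):ℝ)).1 x₀)
        = |((qs a s : ℚ):ℝ) - ((qs b t : ℚ):ℝ)| * dist y y' :=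
    fun a b s t => hphi _ _ (hqs0 a s) (hqs1 a s) (hqs0 b t) (hqs1 b t)
  -- Cauchy sequences and limits
  have hcauchy : ∀ t ∈ Set.Icc (0:ℝ) 1,
      CauchySeq (fun m : ℕ => (c ((qs m t : ℚ):ℝ)).1 x₀) := by
    intro t ht
    apply cauchySeq_of_le_tendsto_0 (fun m : ℕ => 2 / ((m:ℝ)+1) * dist y y')
    · intro a b M haM hbM
      rw [hdistseq a b t t]
      have h1 := hqsapprox a t ht
      have h2 := hqsapprox b t ht
      have ha' : 1 / ((a:ℝ)+1) ≤ 1 / ((M:ℝ)+1) := by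
        apply one_div_le_one_div_of_le (by positivity)
        have : (M:ℝ) ≤ a := by exact_mod_cast haM
        linarith
      have hb' : 1 / ((b:ℝ)+1) ≤ 1 / ((M:ℝ)+1) := by
        apply one_div_le_one_div_of_le (by positivity)
        have : (M:ℝ) ≤ b := by exact_mod_cast hbM
        linarith
      have habs : |((qs a t : ℚ):ℝ) - ((qs b t : ℚ):ℝ)| ≤ 2 / ((M:ℝ)+1) := by
        calc |((qs a t : ℚ):ℝ) - ((qs b t : ℚ):ℝ)|
            ≤ |((qs a t : ℚ):ℝ) - t| + |t - ((qs b t : ℚ):ℝ)| := abs_sub_le _ _ _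
          _ ≤ 1 / ((a:ℝ)+1) + 1 / ((b:ℝ)+1) := by
              rw [abs_sub_comm t]
              exact add_le_add h1 h2
          _ ≤ 2 / ((M:ℝ)+1) := by
              rw [show (2:ℝ) / ((M:ℝ)+1) = 1/((M:ℝ)+1) + 1/((M:ℝ)+1) by ring]
              exact add_le_add ha' hb'
      exact mul_le_mul_of_nonneg_right habs dist_nonneg
    · have : Tendsto (fun m : ℕ => 2 / ((m:ℝ)+1)) atTop (𝓝 0) := by
        have := tendsto_one_div_add_atTop_nhds_zero_nat.const_mul (2:ℝ)
        simpa [mul_one_div, div_eq_mul_inv] using this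
      simpa using this.mul_const (dist y y')
  have hconv : ∀ t : ℝ, t ∈ Set.Icc (0:ℝ) 1 →
      ∃ w : N, Tendsto (fun m : ℕ => (c ((qs m t : ℚ):ℝ)).1 x₀) atTop (𝓝 w) :=
    fun t ht => cauchySeq_tendsto_of_complete (hcauchy t ht)
  refine ⟨fun t => if ht : t ∈ Set.Icc (0:ℝ) 1 then (hconv t ht).choose else y, ?_, ?_, ?_⟩
  · have h0I : (0:ℝ) ∈ Set.Icc (0:ℝ) 1 := ⟨le_refl _, zero_le_one⟩
    simp only [dif_pos h0I]
    have hT := (hconv 0 h0I).choose_spec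
    have hconst : ∀ m : ℕ, (c ((qs m 0 : ℚ):ℝ)).1 x₀ = y := by
      intro m
      have hq0 : qs m 0 = 0 := by
        rw [hqs]
        simp
      rw [hq0]
      push_cast
      rw [hc0]
      exact hFx
    have : Tendsto (fun m : ℕ => (c ((qs m 0 : ℚ):ℝ)).1 x₀) atTop (𝓝 y) := by
      simp only [hconst]
      exact tendsto_const_nhds
    exact tendsto_nhds_unique hT this
  · have h1I : (1:ℝ) ∈ Set.Icc (0:ℝ) 1 := ⟨zero_le_one, le_refl _⟩
    simp only [dif_pos h1I]
    have hT := (hconv 1 h1I).choose_spec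
    have hconst : ∀ m : ℕ, (c ((qs m 1 : ℚ):ℝ)).1 x₀ = y' := by
      intro m
      have hq1 : qs m 1 = 1 := by
        rw [hqs]
        have hfl : (1:ℝ) * ((m:ℝ)+1) = ((m+1 : ℕ) : ℝ) := by push_cast; ring
        simp only [hfl, Int.floor_natCast]
        have : ((((m+1:ℕ) : ℤ) : ℚ)) / ((m:ℚ)+1) = 1 := by
          rw [div_eq_one_iff_eq (by positivity)]
          push_cast
          ring
        rw [this]
        simp
      rw [hq1]
      push_cast
      rw [hc1]
      exact hFx'
    have : Tendsto (fun m : ℕ => (c ((qs m 1 : ℚ):ℝ)).1 x₀) atTop (𝓝 y') := by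
      simp only [hconst]
      exact tendsto_const_nhds
    exact tendsto_nhds_unique hT this
  · intro s hs t ht
    simp only [dif_pos hs, dif_pos ht]
    have hTs := (hconv s hs).choose_spec
    have hTt := (hconv t ht).choose_spec
    have h1 : Tendsto (fun m : ℕ =>
        dist ((c ((qs m s : ℚ):ℝ)).1 x₀) ((c ((qs m t : ℚ):ℝ)).1 x₀)) atTop
        (𝓝 (dist ((hconv s hs).choose) ((hconv t ht).choose))) := hTs.dist hTt
    have h2 : Tendsto (fun m : ℕ =>
        dist ((c ((qs m s : ℚ):ℝ)).1 x₀) ((c ((qs m t : ℚ):ℝ)).1 x₀)) atTop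
        (𝓝 (|s - t| * dist y y')) := by
      simp only [fun m : ℕ => hdistseq m m s t]
      exact (((htendqs s hs).sub (htendqs t ht)).abs).mul_const _
    exact tendsto_nhds_unique h1 h2



end NLS
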